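/- Let K be a field and R = K⟨x,y⟩/(yx−1) the Jacobson algebra. Then R is not left Noetherian, yet every simple left R-module is finitely presented. -/

import Mathlib

/-- A directed graph: a set of vertices, a set of edges, and source/range maps. -/
structure DirGraph where
  V : Type
  E : Type
  src : E → V
  rng : E → V

namespace DirGraph

variable (G : DirGraph)

/-- `Connects u v` means there is a finite path (possibly of length 0) from `u` to `v`,
i.e. `u ≥ v`. -/
inductive Connects : G.V → G.V → Prop
  | refl (v : G.V) : Connects v v
  | step {u w : G.V} (e : G.E) : G.src e = u → Connects (G.rng e) w → Connects u w

/-- A vertex is a sink if it emits no edges. -/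
def IsSink (v : G.V) : Prop := ∀ e : G.E, G.src e ≠ v

/-- A vertex is an infinite emitter if it emits infinitely many edges. -/
def IsInfiniteEmitter (v : G.V) : Prop := {e : G.E | G.src e = v}.Infinite

/-- A vertex is regular if it emits finitely many, but at least one, edges. -/
def IsRegular (v : G.V) : Prop :=
  {e : G.E | G.src e = v}.Finite ∧ {e : G.E | G.src e = v}.Nonempty

/-- A set of vertices is hereditary if it is closed under `≥`. -/
def Hereditary (H : Set G.V) : Prop := ∀ v ∈ H, ∀ w, G.Connects v w → w ∈ H

/-- A set of vertices is saturated if it contains every regular vertex all of whose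
emitted edges have range in the set. -/
def Saturated (H : Set G.V) : Prop :=
  ∀ v, G.IsRegular v → (∀ e : G.E, G.src e = v → G.rng e ∈ H) → v ∈ H

/-- `M(v) = {w : w ≥ v}`. -/
def Mv (v : G.V) : Set G.V := {w | G.Connects w v}

/-- A closed path based at `v`: a nonempty list of consecutive edges starting and ending
at `v`. -/
structure ClosedPath (v : G.V) where
  edges : List G.E
  ne : edges ≠ []
  chain : edges.Chain' (fun e f => G.rng e = G.src f)
  src_eq : G.src (edges.head ne) = v
  rng_eq : G.rng (edges.getLast ne) = v

/-- A cycle based at `v`: a closed path based at `v` which does not pass through any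
vertex twice. -/
structure Cycle (v : G.V) extends ClosedPath G v where
  nodup : (edges.map G.src).Nodup

/-- An infinite path: a sequence of consecutive edges, indexed by `ℕ`. -/
structure InfPath where
  edge : ℕ → G.E
  chain : ∀ n, G.rng (edge n) = G.src (edge (n + 1))

variable {G}

@[ext] lemma InfPath.ext {p q : G.InfPath} (h : p.edge = q.edge) : p = q := by
  cases p; cases q; simp only at h; subst h; rfl

/-- `τ_{>n}(p)`, the shift of the infinite path `p` by `n`. -/
def InfPath.shift (p : G.InfPath) (n : ℕ) : G.InfPath where
  edge k := p.edge (k + n)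
  chain k := by have := p.chain (k + n); rwa [show k + n + 1 = k + 1 + n by omega] at this

/-- Two infinite paths are tail-equivalent if some shift of the first equals some shift
of the second. -/
def TailEquiv (p q : G.InfPath) : Prop := ∃ m n : ℕ, p.shift m = q.shift n

/-- The set `p^0` of vertices visited by the infinite path `p`. -/
def InfPath.vertices (p : G.InfPath) : Set G.V := {v | ∃ n : ℕ, G.src (p.edge n) = v}

/-- `M(p) = {w : w ≥ v for some vertex v on p}`. -/
def Mp (p : G.InfPath) : Set G.V := {w | ∃ v ∈ p.vertices, G.Connects w v}

/-- The set `c^0` of vertices visited by a closed path `c`. -/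
def ClosedPath.vertexSet {v : G.V} (c : G.ClosedPath v) : Set G.V :=
  {w | ∃ e ∈ c.edges, G.src e = w}

/-- An exit for the (closed) path `c`: an edge `e` with `s(e) = s(e_i)` and `e ≠ e_i`
for some `i`. -/
def ClosedPath.HasExit {v : G.V} (c : G.ClosedPath v) : Prop :=
  ∃ (i : Fin c.edges.length) (e : G.E), G.src e = G.src (c.edges.get i) ∧ e ≠ c.edges.get i

lemma ClosedPath.length_pos {v : G.V} (c : G.ClosedPath v) : 0 < c.edges.length :=
  List.length_pos_iff.mpr c.ne

/-- The rational infinite path `c^∞ = ccc⋯` attached to a closed path `c`. -/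
def ClosedPath.toInfPath {v : G.V} (c : G.ClosedPath v) : G.InfPath where
  edge n := c.edges.get ⟨n % c.edges.length, Nat.mod_lt _ c.length_pos⟩
  chain n := by
    have hL : 0 < c.edges.length := c.length_pos
    have hmod : (n + 1) % c.edges.length = (n % c.edges.length + 1) % c.edges.length :=
      (Nat.mod_add_mod n c.edges.length 1).symm
    by_cases h : n % c.edges.length + 1 < c.edges.length
    · have h2 : (n + 1) % c.edges.length = n % c.edges.length + 1 := by
        rw [hmod, Nat.mod_eq_of_lt h]
      have := List.isChain_iff_getElem.mp c.chain (n % c.edges.length) (by omega)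
      simp only [h2, List.get_eq_getElem]
      convert this using 3
    · have hlast : n % c.edges.length = c.edges.length - 1 := by
        have := Nat.mod_lt n hL; omega
      have h2 : (n + 1) % c.edges.length = 0 := by
        rw [hmod, hlast, Nat.sub_add_cancel hL, Nat.mod_self]
      have e1 : c.edges.get ⟨n % c.edges.length, Nat.mod_lt _ hL⟩ = c.edges.getLast c.ne := by
        rw [List.getLast_eq_getElem]
        simp [hlast]
      have e2 : c.edges.get ⟨(n + 1) % c.edges.length, Nat.mod_lt _ hL⟩ =
          c.edges.head c.ne := by
        rw [List.head_eq_getElem]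
        simp [h2]
      rw [e1, e2, c.rng_eq, c.src_eq]

end DirGraph

namespace DirGraph
variable {G : DirGraph}

lemma InfPath.shift_shift (p : G.InfPath) (m n : ℕ) :
    (p.shift m).shift n = p.shift (n + m) := by
  ext k
  show p.edge (k + n + m) = p.edge (k + (n + m))
  rw [Nat.add_assoc]

/-- Concatenation of two closed paths based at the same vertex. -/
def ClosedPath.comp {v : G.V} (c d : G.ClosedPath v) : G.ClosedPath v where
  edges := c.edges ++ d.edges
  ne := by simp [c.ne]
  chain := by
    refine c.chain.append d.chain ?_
    intro x hx y hy
    rw [List.getLast?_eq_getLast c.ne, Option.mem_def, Option.some_inj] at hx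
    rw [List.head?_eq_head d.ne, Option.mem_def, Option.some_inj] at hy
    rw [← hx, ← hy] at *
    rw [c.rng_eq, d.src_eq]
  src_eq := by
    have : (c.edges ++ d.edges).head (by simp [c.ne]) = c.edges.head c.ne := by
      rw [List.head_append]
      simp [c.ne]
    rw [this, c.src_eq]
  rng_eq := by
    have : (c.edges ++ d.edges).getLast (by simp [c.ne]) = d.edges.getLast d.ne := by
      rw [List.getLast_append]
      simp [d.ne]
    rw [this, d.rng_eq]

/-- `c.pow m` is the closed path `c^{m+1}`. -/
def ClosedPath.pow {v : G.V} (c : G.ClosedPath v) : ℕ → G.ClosedPath v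
  | 0 => c
  | (m + 1) => c.comp (c.pow m)

/-- Auxiliary index function for the infinite concatenation of a sequence of closed
paths based at the same vertex: `blockIdx f n` is the pair (block number, offset in
the block) corresponding to overall position `n`. -/
def blockIdx {v : G.V} (f : ℕ → G.ClosedPath v) : ℕ → (b : ℕ) × Fin (f b).edges.length
  | 0 => ⟨0, ⟨0, (f 0).length_pos⟩⟩
  | n + 1 =>
    if h : ((blockIdx f n).2 : ℕ) + 1 < (f (blockIdx f n).1).edges.length then
      ⟨(blockIdx f n).1, ⟨(blockIdx f n).2 + 1, h⟩⟩
    else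
      ⟨(blockIdx f n).1 + 1, ⟨0, (f ((blockIdx f n).1 + 1)).length_pos⟩⟩

/-- The infinite path `f 0 · f 1 · f 2 ⋯` obtained by concatenating a sequence of
closed paths based at the same vertex. -/
def infConcat {v : G.V} (f : ℕ → G.ClosedPath v) : G.InfPath where
  edge n := (f (blockIdx f n).1).edges.get (blockIdx f n).2
  chain n := by
    rw [blockIdx]
    by_cases h : ((blockIdx f n).2 : ℕ) + 1 < (f (blockIdx f n).1).edges.length
    · rw [dif_pos h]
      exact List.isChain_iff_getElem.mp (f (blockIdx f n).1).chain ((blockIdx f n).2 : ℕ) (by omega)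
    · rw [dif_neg h]
      have h2 : ((blockIdx f n).2 : ℕ) = (f (blockIdx f n).1).edges.length - 1 := by
        have := (blockIdx f n).2.isLt; omega
      have e1 : (f (blockIdx f n).1).edges.get (blockIdx f n).2 =
          (f (blockIdx f n).1).edges.getLast (f (blockIdx f n).1).ne := by
        rw [List.getLast_eq_getElem]
        simp only [List.get_eq_getElem]
        congr 1
      have e2 : (f ((blockIdx f n).1 + 1)).edges.get ⟨0, (f ((blockIdx f n).1 + 1)).length_pos⟩ =
          (f ((blockIdx f n).1 + 1)).edges.head (f ((blockIdx f n).1 + 1)).ne := by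
        rw [List.head_eq_getElem]
        rfl
      rw [e1]
      rw [e2]
      rw [(f (blockIdx f n).1).rng_eq]
      rw [(f ((blockIdx f n).1 + 1)).src_eq]

end DirGraph

open Classical

namespace DirGraph

variable (K : Type) [Field K] (G : DirGraph)

/-- The generator of the free algebra corresponding to a vertex `v`. -/
noncomputable def vtx (v : G.V) : FreeAlgebra K (G.V ⊕ G.E ⊕ G.E) :=
  FreeAlgebra.ι K (Sum.inl v)

/-- The generator of the free algebra corresponding to an edge `e`. -/
noncomputable def edg (e : G.E) : FreeAlgebra K (G.V ⊕ G.E ⊕ G.E) :=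
  FreeAlgebra.ι K (Sum.inr (Sum.inl e))

/-- The generator of the free algebra corresponding to a ghost edge `e*`. -/
noncomputable def gst (e : G.E) : FreeAlgebra K (G.V ⊕ G.E ⊕ G.E) :=
  FreeAlgebra.ι K (Sum.inr (Sum.inr e))

variable [Fintype G.V] [Fintype G.E]

/-- The defining relations of the Leavitt path algebra of a finite graph `G` over a
field `K`. -/
inductive LeavittRel : FreeAlgebra K (G.V ⊕ G.E ⊕ G.E) → FreeAlgebra K (G.V ⊕ G.E ⊕ G.E) → Prop
  | vtx_self (v : G.V) : LeavittRel (vtx K G v * vtx K G v) (vtx K G v)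
  | vtx_ne {v w : G.V} (h : v ≠ w) : LeavittRel (vtx K G v * vtx K G w) 0
  | vtx_sum : LeavittRel (∑ v : G.V, vtx K G v) 1
  | edge_src (e : G.E) : LeavittRel (vtx K G (G.src e) * edg K G e) (edg K G e)
  | edge_rng (e : G.E) : LeavittRel (edg K G e * vtx K G (G.rng e)) (edg K G e)
  | ghost_rng (e : G.E) : LeavittRel (vtx K G (G.rng e) * gst K G e) (gst K G e)
  | ghost_src (e : G.E) : LeavittRel (gst K G e * vtx K G (G.src e)) (gst K G e)
  | ck1_same (e : G.E) : LeavittRel (gst K G e * edg K G e) (vtx K G (G.rng e))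
  | ck1_ne {e f : G.E} (h : e ≠ f) : LeavittRel (gst K G e * edg K G f) 0
  | ck2 (v : G.V) (h : ¬ G.IsSink v) :
      LeavittRel (∑ e ∈ Finset.univ.filter (fun e => G.src e = v), edg K G e * gst K G e)
        (vtx K G v)

/-- The Leavitt path algebra of a finite graph `G` over a field `K`. -/
noncomputable abbrev LeavittPathAlgebra := RingQuot (LeavittRel K G)

/-- The image of a vertex `v` in the Leavitt path algebra. -/
noncomputable def Lvtx (v : G.V) : LeavittPathAlgebra K G :=
  RingQuot.mkAlgHom K (LeavittRel K G) (vtx K G v)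

/-- The image of an edge `e` in the Leavitt path algebra. -/
noncomputable def Ledg (e : G.E) : LeavittPathAlgebra K G :=
  RingQuot.mkAlgHom K (LeavittRel K G) (edg K G e)

/-- The image of a ghost edge `e*` in the Leavitt path algebra. -/
noncomputable def Lgst (e : G.E) : LeavittPathAlgebra K G :=
  RingQuot.mkAlgHom K (LeavittRel K G) (gst K G e)

end DirGraph


/-- The defining relation `y·x = 1` of the Jacobson algebra, inside the free algebra
on two generators `x = ι 0`, `y = ι 1`. -/
inductive JacRel (K : Type) [Field K] : FreeAlgebra K (Fin 2) → FreeAlgebra K (Fin 2) → Prop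
  | rel : JacRel K (FreeAlgebra.ι K 1 * FreeAlgebra.ι K 0) 1

/-- The Jacobson algebra `K⟨x,y⟩/(yx - 1)`. -/
noncomputable abbrev JacobsonAlgebra (K : Type) [Field K] := RingQuot (JacRel K)

namespace JacProof

variable (K : Type) [Field K]

noncomputable def Xg : JacobsonAlgebra K := RingQuot.mkAlgHom K (JacRel K) (FreeAlgebra.ι K 0)
noncomputable def Yg : JacobsonAlgebra K := RingQuot.mkAlgHom K (JacRel K) (FreeAlgebra.ι K 1)

lemma YX : Yg K * Xg K = 1 := by
  have h := RingQuot.mkAlgHom_rel K (JacRel.rel (K := K))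
  simpa [Xg, Yg, map_mul, map_one] using h

lemma YnXn (n : ℕ) : (Yg K) ^ n * (Xg K) ^ n = 1 := by
  induction n with
  | zero => simp
  | succ n ih =>
    rw [pow_succ, pow_succ']
    calc Yg K ^ n * Yg K * (Xg K * Xg K ^ n)
        = Yg K ^ n * (Yg K * Xg K) * Xg K ^ n := by rw [mul_assoc, mul_assoc, mul_assoc]
      _ = 1 := by rw [YX]; simpa using ih


/-! ### Part 1: the shift representation and non-noetherianity -/

noncomputable def Ush : Module.End K (ℕ →₀ K) := Finsupp.lmapDomain K K (· + 1)

noncomputable def Dsh : Module.End K (ℕ →₀ K) :=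
  Finsupp.lcomapDomain (· + 1) (add_left_injective 1)

lemma DU : Dsh K * Ush K = 1 := by
  apply LinearMap.ext
  intro v
  show Dsh K (Ush K v) = v
  ext a
  show (Finsupp.mapDomain (· + 1) v) (a + 1) = v a
  exact Finsupp.mapDomain_apply (add_left_injective 1) v a

noncomputable def rep : JacobsonAlgebra K →ₐ[K] Module.End K (ℕ →₀ K) :=
  RingQuot.liftAlgHom K ⟨FreeAlgebra.lift K ![Ush K, Dsh K], by
    intro x y h
    cases h
    simp only [map_mul, FreeAlgebra.lift_ι_apply, map_one]
    show Dsh K * Ush K = 1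
    exact DU K⟩

lemma rep_X : rep K (Xg K) = Ush K := by
  rw [Xg, rep, RingQuot.liftAlgHom_mkAlgHom_apply]
  simp [FreeAlgebra.lift_ι_apply]

lemma rep_Y : rep K (Yg K) = Dsh K := by
  rw [Yg, rep, RingQuot.liftAlgHom_mkAlgHom_apply]
  simp [FreeAlgebra.lift_ι_apply]

lemma XY_ne_one : Xg K * Yg K ≠ 1 := by
  intro h
  have h2 : Ush K * Dsh K = 1 := by
    rw [← rep_X, ← rep_Y, ← map_mul, h, map_one]
  have h3 : (Ush K * Dsh K) (Finsupp.single 0 (1 : K)) = Finsupp.single 0 (1 : K) := by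
    rw [h2]; rfl
  have h4 : Dsh K (Finsupp.single 0 (1 : K)) = 0 := by
    ext a
    show (Finsupp.single 0 (1 : K)) (a + 1) = 0
    exact Finsupp.single_eq_of_ne (by omega)
  rw [show (Ush K * Dsh K) (Finsupp.single 0 (1:K)) = Ush K (Dsh K (Finsupp.single 0 (1:K))) from rfl, h4, map_zero] at h3
  have := DFunLike.congr_fun h3.symm 0
  simp [Finsupp.single_eq_same] at this

lemma not_noetherian : ¬ IsNoetherianRing (JacobsonAlgebra K) := by
  intro h
  apply XY_ne_one K
  set R := JacobsonAlgebra K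
  let f : R →ₗ[R] R := LinearMap.toSpanSingleton R R (Xg K)
  let g : R →ₗ[R] R := LinearMap.toSpanSingleton R R (Yg K)
  have hfg : ∀ r : R, f (g r) = r := by
    intro r
    show (r • Yg K) • Xg K = r
    simp only [smul_eq_mul, mul_assoc, YX, mul_one]
  have hsurj : Function.Surjective f := fun r => ⟨g r, hfg r⟩
  have hinj : Function.Injective f := IsNoetherian.injective_of_surjective_endomorphism f hsurj
  have : f (g (f 1)) = f 1 := hfg (f 1)
  have h1 : g (f 1) = 1 := hinj this
  have h2 : g (f 1) = Xg K * Yg K := by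
    show ((1 : R) • Xg K) • Yg K = _
    simp [smul_eq_mul]
  rw [← h2]; exact h1


/-! ### Part 2 helpers -/

open Polynomial

noncomputable def aX (p : K[X]) : JacobsonAlgebra K := Polynomial.aeval (Xg K) p

lemma aX_comm (p u : K[X]) : aX K p * aX K u = aX K u * aX K p := by
  simp only [aX, ← map_mul]
  rw [mul_comm]

/-- Reduction: modulo the left ideal generated by `Y - w(X)`, every element of the
form `r * u(X)` is congruent to a polynomial in `X`. -/
lemma Lred (w : K[X]) (r : JacobsonAlgebra K) :
    ∀ u : K[X], ∃ p : K[X],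
      r * aX K u - aX K p ∈ Submodule.span (JacobsonAlgebra K) {Yg K - aX K w} := by
  obtain ⟨a, rfl⟩ := RingQuot.mkAlgHom_surjective K (JacRel K) r
  induction a with
  | grade0 c =>
    intro u
    refine ⟨Polynomial.C c * u, ?_⟩
    rw [AlgHom.commutes]
    rw [show aX K (Polynomial.C c * u) = algebraMap K _ c * aX K u by
      simp only [aX, map_mul, Polynomial.aeval_C]]
    simp [aX]
  | grade1 i =>
    have hi : RingQuot.mkAlgHom K (JacRel K) (FreeAlgebra.ι K i) = Xg K ∨
        RingQuot.mkAlgHom K (JacRel K) (FreeAlgebra.ι K i) = Yg K := by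
      fin_cases i
      · exact Or.inl rfl
      · exact Or.inr rfl
    rcases hi with hi | hi
    · -- X
      intro u
      refine ⟨Polynomial.X * u, ?_⟩
      rw [hi]
      rw [show aX K (Polynomial.X * u) = Xg K * aX K u by
        simp only [aX, map_mul, Polynomial.aeval_X]]
      simp
    · -- Y
      intro u
      refine ⟨u.divX + Polynomial.C (u.coeff 0) * w, ?_⟩
      rw [hi]
      have hu : Xg K * aX K u.divX + algebraMap K _ (u.coeff 0) = aX K u := by
        simp only [aX]
        conv_rhs => rw [← Polynomial.X_mul_divX_add u]
        rw [map_add, map_mul, Polynomial.aeval_X, Polynomial.aeval_C]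
      have h2 : aX K (u.divX + Polynomial.C (u.coeff 0) * w)
          = aX K u.divX + algebraMap K _ (u.coeff 0) * aX K w := by
        rw [aX, map_add, map_mul, Polynomial.aeval_C]; rfl
      rw [← hu, h2]
      have : Yg K * (Xg K * aX K u.divX + algebraMap K _ (u.coeff 0))
          - (aX K u.divX + algebraMap K _ (u.coeff 0) * aX K w)
          = algebraMap K _ (u.coeff 0) * (Yg K - aX K w) := by
        rw [mul_add, ← mul_assoc, YX, one_mul]
        rw [show Yg K * algebraMap K _ (u.coeff 0) = algebraMap K _ (u.coeff 0) * Yg K from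
          (Algebra.commutes _ _).symm, mul_sub]
        abel
      rw [this]
      exact Submodule.smul_mem _ _ (Submodule.mem_span_singleton_self _)
  | mul a b iha ihb =>
    intro u
    obtain ⟨p2, h2⟩ := ihb u
    obtain ⟨p1, h1⟩ := iha p2
    refine ⟨p1, ?_⟩
    rw [map_mul]
    set A := RingQuot.mkAlgHom K (JacRel K) a
    set B := RingQuot.mkAlgHom K (JacRel K) b
    have : A * B * aX K u - aX K p1
        = (A * aX K p2 - aX K p1) + A * (B * aX K u - aX K p2) := by
      rw [mul_sub, mul_assoc]; abel
    rw [this]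
    exact add_mem h1 (Submodule.smul_mem _ A h2)
  | add a b iha ihb =>
    intro u
    obtain ⟨p1, h1⟩ := iha u
    obtain ⟨p2, h2⟩ := ihb u
    refine ⟨p1 + p2, ?_⟩
    rw [map_add]
    have : (RingQuot.mkAlgHom K (JacRel K) a + RingQuot.mkAlgHom K (JacRel K) b) * aX K u
        - aX K (p1 + p2)
        = (RingQuot.mkAlgHom K (JacRel K) a * aX K u - aX K p1)
          + (RingQuot.mkAlgHom K (JacRel K) b * aX K u - aX K p2) := by
      rw [show aX K (p1 + p2) = aX K p1 + aX K p2 from map_add _ _ _]; noncomm_ring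
    rw [this]
    exact add_mem h1 h2

/-- Factor out the largest power of `X` from a nonzero polynomial. -/
lemma factor_out (p : K[X]) (hp : p ≠ 0) :
    ∃ (k : ℕ) (q : K[X]), p = Polynomial.X ^ k * q ∧ q.coeff 0 ≠ 0 ∧
      q.leadingCoeff = p.leadingCoeff := by
  obtain ⟨q, hq⟩ : Polynomial.X ^ p.natTrailingDegree ∣ p :=
    Polynomial.X_pow_dvd_iff.mpr fun d hd => Polynomial.coeff_eq_zero_of_lt_natTrailingDegree hd
  refine ⟨p.natTrailingDegree, q, hq, ?_, ?_⟩
  · have h0 : p.coeff p.natTrailingDegree ≠ 0 :=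
      Polynomial.trailingCoeff_nonzero_iff_nonzero.mpr hp
    have h1 : (Polynomial.X ^ p.natTrailingDegree * q).coeff p.natTrailingDegree = q.coeff 0 := by
      simpa using Polynomial.coeff_X_pow_mul q p.natTrailingDegree 0
    rw [← hq] at h1
    rwa [h1] at h0
  · rw [hq, Polynomial.leadingCoeff_mul, Polynomial.leadingCoeff_X_pow, one_mul]


lemma aX_decomp (u : K[X]) :
    aX K u = Xg K * aX K u.divX + algebraMap K (JacobsonAlgebra K) (u.coeff 0) := by
  simp only [aX]
  conv_lhs => rw [← Polynomial.X_mul_divX_add u]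
  rw [map_add, map_mul, Polynomial.aeval_X, Polynomial.aeval_C]

lemma E_mul_Xg : (1 - Xg K * Yg K) * Xg K = 0 := by
  rw [sub_mul, one_mul, mul_assoc, YX, mul_one, sub_self]

lemma E_aXq (q : K[X]) : (1 - Xg K * Yg K) * aX K q
    = algebraMap K (JacobsonAlgebra K) (q.coeff 0) * (1 - Xg K * Yg K) := by
  rw [aX_decomp, mul_add, ← mul_assoc, E_mul_Xg, zero_mul, zero_add, Algebra.commutes]

lemma aX_zero : aX K (0 : K[X]) = 0 := by simp [aX]

lemma aX_one : aX K (1 : K[X]) = 1 := by simp [aX]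

lemma caseA_one (r : JacobsonAlgebra K)
    (hr : r ∉ Submodule.span (JacobsonAlgebra K) {Yg K}) :
    ∃ s t : JacobsonAlgebra K, 1 = s * r + t * Yg K := by
  obtain ⟨p, hp⟩ := Lred K 0 r 1
  rw [show Yg K - aX K 0 = Yg K by rw [aX_zero, sub_zero], aX_one, mul_one] at hp
  obtain ⟨t0, ht0⟩ := Submodule.mem_span_singleton.mp hp
  rw [smul_eq_mul] at ht0
  have hp0 : p ≠ 0 := by
    rintro rfl
    apply hr
    rw [aX_zero, sub_zero] at ht0
    rw [← ht0]
    exact Submodule.smul_mem _ t0 (Submodule.mem_span_singleton_self _)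
  obtain ⟨k, q, hqe, hc0, -⟩ := factor_out K p hp0
  set c := q.coeff 0 with hc
  have haXp : aX K p = (Xg K) ^ k * aX K q := by
    rw [hqe, aX, map_mul, map_pow, Polynomial.aeval_X]
    rfl
  set E := 1 - Xg K * Yg K with hE
  set s := algebraMap K (JacobsonAlgebra K) c⁻¹ * (E * (Yg K) ^ k) with hs_def
  have hs : s * aX K p = E := by
    rw [hs_def, haXp, mul_assoc, mul_assoc, ← mul_assoc ((Yg K) ^ k), YnXn, one_mul,
      E_aXq, ← mul_assoc, ← map_mul, inv_mul_cancel₀ hc0, map_one, one_mul]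
  have hr' : r = aX K p + t0 * Yg K := by rw [ht0]; abel
  refine ⟨s, Xg K - s * t0, ?_⟩
  have h2 : s * r + (Xg K - s * t0) * Yg K = s * aX K p + Xg K * Yg K := by
    rw [hr', mul_add, sub_mul, ← mul_assoc s t0 (Yg K)]
    abel
  rw [h2, hs, hE, sub_add_cancel]

/-- In a module where `X*Y` acts as the identity, every operator `r` becomes a
polynomial in `X` after multiplying by a suitable power of `X`. -/
lemma starB (M : Type) [AddCommGroup M] [Module (JacobsonAlgebra K) M]
    (hB : ∀ m : M, (Xg K * Yg K) • m = m) (r : JacobsonAlgebra K) :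
    ∃ (n : ℕ) (p : K[X]), ∀ m : M, ((Xg K) ^ n * r) • m = aX K p • m := by
  obtain ⟨a, rfl⟩ := RingQuot.mkAlgHom_surjective K (JacRel K) r
  induction a with
  | grade0 c =>
    refine ⟨0, Polynomial.C c, fun m => ?_⟩
    rw [pow_zero, one_mul, AlgHom.commutes, show aX K (Polynomial.C c)
      = algebraMap K (JacobsonAlgebra K) c by rw [aX, Polynomial.aeval_C]]
  | grade1 i =>
    have hi : RingQuot.mkAlgHom K (JacRel K) (FreeAlgebra.ι K i) = Xg K ∨
        RingQuot.mkAlgHom K (JacRel K) (FreeAlgebra.ι K i) = Yg K := by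
      fin_cases i
      · exact Or.inl rfl
      · exact Or.inr rfl
    rcases hi with hi | hi <;> rw [hi]
    · refine ⟨0, Polynomial.X, fun m => ?_⟩
      rw [pow_zero, one_mul, show aX K Polynomial.X = Xg K by rw [aX, Polynomial.aeval_X]]
    · refine ⟨1, 1, fun m => ?_⟩
      rw [pow_one, aX_one, one_smul]
      exact hB m
  | mul a b iha ihb =>
    obtain ⟨n1, p1, h1⟩ := iha
    obtain ⟨n2, p2, h2⟩ := ihb
    set A := RingQuot.mkAlgHom K (JacRel K) a
    set B := RingQuot.mkAlgHom K (JacRel K) b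
    refine ⟨n1 + n2, p1 * p2, fun m => ?_⟩
    have e1 : (Xg K) ^ (n1 + n2) * (A * B) = (Xg K) ^ n2 * (((Xg K) ^ n1 * A) * B) := by
      rw [add_comm n1 n2, pow_add]
      noncomm_ring
    have e2 : aX K (p1 * p2) = aX K p1 * (aX K p2) := by simp only [aX, map_mul]
    have hcomm : (Xg K) ^ n2 * aX K p1 = aX K p1 * (Xg K) ^ n2 := by
      have hx : (Xg K) ^ n2 = aX K (Polynomial.X ^ n2) := by
        simp only [aX, map_pow, Polynomial.aeval_X]
      rw [hx, aX_comm]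
    have e3 : ((Xg K) ^ n2 * aX K p1) * B = aX K p1 * ((Xg K) ^ n2 * B) := by
      rw [hcomm, mul_assoc]
    have step1 : (((Xg K) ^ n1 * A) * B) • m = ((Xg K) ^ n1 * A) • (B • m) := mul_smul _ _ _
    rw [map_mul, e1, e2, mul_smul, step1, h1 (B • m), ← mul_smul, ← mul_smul, e3,
      mul_smul, h2 m, ← mul_smul]
  | add a b iha ihb =>
    obtain ⟨n1, p1, h1⟩ := iha
    obtain ⟨n2, p2, h2⟩ := ihb
    set A := RingQuot.mkAlgHom K (JacRel K) a
    set B := RingQuot.mkAlgHom K (JacRel K) b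
    refine ⟨n1 + n2, Polynomial.X ^ n2 * p1 + Polynomial.X ^ n1 * p2, fun m => ?_⟩
    have e1 : (Xg K) ^ (n1 + n2) * (A + B)
        = (Xg K) ^ n2 * ((Xg K) ^ n1 * A) + (Xg K) ^ n1 * ((Xg K) ^ n2 * B) := by
      rw [mul_add]
      congr 1
      · rw [add_comm n1 n2, pow_add, mul_assoc]
      · rw [pow_add, mul_assoc]
    have e2 : aX K (Polynomial.X ^ n2 * p1 + Polynomial.X ^ n1 * p2)
        = (Xg K) ^ n2 * aX K p1 + (Xg K) ^ n1 * aX K p2 := by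
      rw [aX, map_add, map_mul, map_mul, map_pow, map_pow, Polynomial.aeval_X]
      rfl
    rw [map_add, e1, e2, add_smul, add_smul]
    congr 1
    · rw [mul_smul, h1 m, ← mul_smul]
    · rw [mul_smul, h2 m, ← mul_smul]


lemma caseA (M : Type) [AddCommGroup M] [Module (JacobsonAlgebra K) M]
    [IsSimpleModule (JacobsonAlgebra K) M]
    (m : M) (hm : (1 - Xg K * Yg K) • m ≠ 0) :
    Module.FinitePresentation (JacobsonAlgebra K) M := by
  set R := JacobsonAlgebra K
  set m0 := (1 - Xg K * Yg K) • m with hm0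
  have hf : Function.Surjective (LinearMap.toSpanSingleton R M m0) :=
    IsSimpleModule.toSpanSingleton_surjective R hm
  have hYm0 : Yg K • m0 = 0 := by
    rw [hm0, ← mul_smul]
    rw [show Yg K * (1 - Xg K * Yg K) = 0 by
      rw [mul_sub, mul_one, ← mul_assoc, YX, one_mul, sub_self]]
    rw [zero_smul]
  have hker : LinearMap.ker (LinearMap.toSpanSingleton R M m0)
      = Submodule.span R {Yg K} := by
    apply le_antisymm
    · intro r hrk
      rw [LinearMap.mem_ker, LinearMap.toSpanSingleton_apply] at hrk
      by_contra hr
      obtain ⟨s, t, hst⟩ := caseA_one K r hr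
      apply hm
      have : m0 = (1 : R) • m0 := (one_smul R m0).symm
      rw [this, hst, add_smul, mul_smul, mul_smul, hrk, hYm0, smul_zero, smul_zero, add_zero]
    · rw [Submodule.span_le, Set.singleton_subset_iff]
      rw [SetLike.mem_coe, LinearMap.mem_ker, LinearMap.toSpanSingleton_apply]
      exact hYm0
  exact Module.finitePresentation_of_surjective _ hf
    (hker ▸ Submodule.fg_span_singleton (Yg K))


lemma key_aux (R : Type) [Ring R] [Algebra K R] (c : K) (hc0 : c ≠ 0) (Y : R) :
    algebraMap K R (-c⁻¹) * -(algebraMap K R c * Y) = Y := by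
  rw [map_neg, neg_mul, mul_neg, neg_neg, ← mul_assoc, ← map_mul,
    inv_mul_cancel₀ hc0, map_one, one_mul]

lemma caseB (M : Type) [AddCommGroup M] [Module (JacobsonAlgebra K) M]
    [IsSimpleModule (JacobsonAlgebra K) M]
    (hB : ∀ m : M, (1 - Xg K * Yg K) • m = 0) :
    Module.FinitePresentation (JacobsonAlgebra K) M := by
  set R := JacobsonAlgebra K with hR
  have hB' : ∀ m : M, (Xg K * Yg K) • m = m := by
    intro m
    have := hB m
    rw [sub_smul, one_smul, sub_eq_zero] at this
    exact this.symm
  have : Nontrivial M := IsSimpleModule.nontrivial R M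
  obtain ⟨m0, hm0⟩ := exists_ne (0 : M)
  have hf : Function.Surjective (LinearMap.toSpanSingleton R M m0) :=
    IsSimpleModule.toSpanSingleton_surjective R hm0
  -- there is a nonzero polynomial annihilating m0
  have htor : ∃ p : K[X], p ≠ 0 ∧ aX K p • m0 = 0 := by
    by_contra hcon
    push_neg at hcon
    set m1 := (Xg K - 1) • m0 with hm1
    have hm1ne : m1 ≠ 0 := by
      intro h0
      refine hcon (Polynomial.X - Polynomial.C 1) (Polynomial.X_sub_C_ne_zero 1) ?_
      rw [show aX K (Polynomial.X - Polynomial.C 1) = Xg K - 1 by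
        simp only [aX, map_sub, Polynomial.aeval_X, Polynomial.aeval_C, map_one]]
      exact h0
    obtain ⟨s, hs⟩ := Submodule.mem_span_singleton.mp
      ((IsSimpleModule.span_singleton_eq_top R hm1ne) ▸ Submodule.mem_top (x := m0))
    obtain ⟨n, p, hnp⟩ := starB K M hB' s
    have h1 : ((Xg K) ^ n * s) • m1 = aX K p • m1 := hnp m1
    have h2 : aX K (Polynomial.X ^ n) • m0
        = aX K (p * (Polynomial.X - Polynomial.C 1)) • m0 := by
      rw [show aX K (Polynomial.X ^ n) = (Xg K) ^ n by
        simp only [aX, map_pow, Polynomial.aeval_X]]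
      rw [show aX K (p * (Polynomial.X - Polynomial.C 1)) = aX K p * (Xg K - 1) by
        simp only [aX, map_mul, map_sub, Polynomial.aeval_X, Polynomial.aeval_C, map_one]]
      calc (Xg K) ^ n • m0 = (Xg K) ^ n • (s • m1) := by rw [hs]
        _ = ((Xg K) ^ n * s) • m1 := (mul_smul _ _ _).symm
        _ = aX K p • m1 := h1
        _ = aX K p • ((Xg K - 1) • m0) := by rw [hm1]
        _ = (aX K p * (Xg K - 1)) • m0 := (mul_smul _ _ _).symm
    have h3 : aX K (Polynomial.X ^ n - p * (Polynomial.X - Polynomial.C 1)) • m0 = 0 := by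
      rw [show aX K (Polynomial.X ^ n - p * (Polynomial.X - Polynomial.C 1))
        = aX K (Polynomial.X ^ n) - aX K (p * (Polynomial.X - Polynomial.C 1)) by
          simp only [aX, map_sub]]
      rw [sub_smul, h2, sub_self]
    refine hcon _ ?_ h3
    intro h0
    have := congrArg (Polynomial.eval 1) h0
    simp [Polynomial.eval_pow, Polynomial.eval_mul, Polynomial.eval_sub] at this
  obtain ⟨p, hp0, hpm⟩ := htor
  -- normalize to monic
  set p1 := p * Polynomial.C (p.leadingCoeff)⁻¹ with hp1
  have hp1monic : p1.Monic := Polynomial.monic_mul_leadingCoeff_inv hp0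
  have hp1m : aX K p1 • m0 = 0 := by
    rw [hp1, show aX K (p * Polynomial.C p.leadingCoeff⁻¹)
        = algebraMap K R p.leadingCoeff⁻¹ * aX K p by
      simp only [aX, map_mul, Polynomial.aeval_C]
      rw [← Algebra.commutes]]
    rw [mul_smul, hpm, smul_zero]
  -- strip powers of X
  obtain ⟨k, q, hqe, hc0, hlc⟩ := factor_out K p1 hp1monic.ne_zero
  have hqmonic : q.Monic := by
    rw [Polynomial.Monic, hlc]
    exact hp1monic
  have hqm : aX K q • m0 = 0 := by
    have haXp1 : aX K p1 = (Xg K) ^ k * aX K q := by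
      rw [hqe]
      simp only [aX, map_mul, map_pow, Polynomial.aeval_X]
    have h1 : (Xg K) ^ k • (aX K q • m0) = 0 := by
      rw [← mul_smul, ← haXp1, hp1m]
    calc aX K q • m0 = (((Yg K) ^ k * (Xg K) ^ k) : R) • (aX K q • m0) := by
          rw [YnXn, one_smul]
      _ = (Yg K) ^ k • ((Xg K) ^ k • (aX K q • m0)) := mul_smul _ _ _
      _ = 0 := by rw [h1, smul_zero]
  -- the inverse polynomial for Y
  set c := q.coeff 0 with hc
  set g := Polynomial.C (-c⁻¹) * q.divX with hg
  have haXg : aX K g = algebraMap K R (-c⁻¹) * aX K q.divX := by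
    simp only [aX, hg, map_mul, Polynomial.aeval_C]
    rfl
  have hYg : (Yg K - aX K g) • m0 = 0 := by
    have hdec : (Xg K * aX K q.divX + algebraMap K R c) • m0 = 0 := by
      rw [← aX_decomp]
      exact hqm
    have h4 : aX K q.divX • m0 + (algebraMap K R c * Yg K) • m0 = 0 := by
      have h5 : (Yg K * (Xg K * aX K q.divX + algebraMap K R c)) • m0 = 0 := by
        rw [mul_smul, hdec, smul_zero]
      rw [mul_add, ← mul_assoc, YX, one_mul, ← Algebra.commutes, add_smul] at h5
      exact h5
    have h6 : aX K g • m0 = Yg K • m0 := by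
      have h7 : aX K q.divX • m0 = (-(algebraMap K R c * Yg K)) • m0 := by
        rw [neg_smul]
        exact eq_neg_of_add_eq_zero_left h4
      have key : algebraMap K R (-c⁻¹) * -(algebraMap K R c * Yg K) = Yg K :=
        key_aux K R c hc0 (Yg K)
      rw [haXg, mul_smul, h7, ← mul_smul, key]
    rw [sub_smul, h6, sub_self]
  set J0 : Submodule R R := Submodule.span R {aX K q, Yg K - aX K g} with hJ0
  have hJ0FG : J0.FG := Submodule.fg_span (Set.Finite.insert _ (Set.finite_singleton _))
  have hJ0le : J0 ≤ LinearMap.ker (LinearMap.toSpanSingleton R M m0) := by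
    rw [hJ0, Submodule.span_le]
    intro z hz
    rcases hz with hz | hz
    · rw [hz]
      rw [SetLike.mem_coe, LinearMap.mem_ker, LinearMap.toSpanSingleton_apply]
      exact hqm
    · rw [Set.mem_singleton_iff] at hz
      rw [hz]
      rw [SetLike.mem_coe, LinearMap.mem_ker, LinearMap.toSpanSingleton_apply]
      exact hYg
  -- R / J0 is finite dimensional over K
  classical
  have hfin : Module.Finite K (R ⧸ J0) := by
    refine ⟨⟨(Finset.range (q.natDegree + 1)).image
      (fun i => (Submodule.Quotient.mk ((Xg K) ^ i) : R ⧸ J0)), ?_⟩⟩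
    rw [eq_top_iff]
    rintro v -
    obtain ⟨r, rfl⟩ := Submodule.Quotient.mk_surjective J0 v
    obtain ⟨p2, hp2⟩ := Lred K g r 1
    rw [aX_one, mul_one] at hp2
    have hsub : Submodule.span R {Yg K - aX K g} ≤ J0 := by
      rw [hJ0]
      apply Submodule.span_mono
      intro z hz
      rw [Set.mem_singleton_iff] at hz
      rw [hz]
      exact Set.mem_insert_of_mem _ rfl
    set p3 := p2 %ₘ q with hp3
    have hmem : r - aX K p3 ∈ J0 := by
      have h1 : r - aX K p2 ∈ J0 := hsub hp2
      have h2 : aX K p2 - aX K p3 ∈ J0 := by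
        have hqd : p2 - p3 = q * (p2 /ₘ q) := by
          have h5 := Polynomial.modByMonic_add_div p2 q
          rw [hp3]
          exact (eq_sub_of_add_eq' h5).symm
        have h6 : aX K p2 - aX K p3 = aX K (p2 /ₘ q) * aX K q := by
          rw [show aX K p2 - aX K p3 = aX K (p2 - p3) by simp only [aX, map_sub], hqd,
            show aX K (q * (p2 /ₘ q)) = aX K q * aX K (p2 /ₘ q) by simp only [aX, map_mul],
            aX_comm]
        rw [h6]
        exact Submodule.smul_mem _ _ (Submodule.subset_span (Set.mem_insert _ _))
      have h3 := add_mem h1 h2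
      rwa [sub_add_sub_cancel] at h3
    have hmk : (Submodule.Quotient.mk r : R ⧸ J0) = Submodule.Quotient.mk (aX K p3) :=
      (Submodule.Quotient.eq J0).mpr hmem
    have hdeg : p3.natDegree < q.natDegree + 1 := by
      rcases eq_or_ne p3 0 with h | h
      · rw [h]
        simp
      · exact Nat.lt_succ_of_lt
          (Polynomial.natDegree_lt_natDegree h (Polynomial.degree_modByMonic_lt p2 hqmonic))
    have hexp := Polynomial.aeval_eq_sum_range' hdeg (Xg K)
    rw [hmk, show aX K p3 = ∑ i ∈ Finset.range (q.natDegree + 1),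
      p3.coeff i • (Xg K) ^ i from hexp]
    rw [show (Submodule.Quotient.mk (∑ i ∈ Finset.range (q.natDegree + 1),
        p3.coeff i • (Xg K) ^ i) : R ⧸ J0)
        = ∑ i ∈ Finset.range (q.natDegree + 1),
          p3.coeff i • (Submodule.Quotient.mk ((Xg K) ^ i) : R ⧸ J0) by
      rw [show (Submodule.Quotient.mk (∑ i ∈ Finset.range (q.natDegree + 1),
          p3.coeff i • (Xg K) ^ i) : R ⧸ J0) = J0.mkQ (∑ i ∈ Finset.range (q.natDegree + 1),
          p3.coeff i • (Xg K) ^ i) from rfl, map_sum]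
      refine Finset.sum_congr rfl fun i _ => ?_
      rw [Submodule.mkQ_apply, Submodule.Quotient.mk_smul]]
    apply Submodule.sum_mem
    intro i hi
    refine Submodule.smul_mem _ _ (Submodule.subset_span ?_)
    simp only [Finset.coe_image, Set.mem_image, Finset.mem_coe]
    exact ⟨i, hi, rfl⟩
  -- conclude that the kernel is finitely generated
  have hFG : (LinearMap.ker (LinearMap.toSpanSingleton R M m0)).FG := by
    apply Submodule.fg_of_fg_map_of_fg_inf_ker J0.mkQ
    · haveI := hfin
      haveI : IsNoetherian K (R ⧸ J0) := isNoetherian_of_isNoetherianRing_of_finite K (R ⧸ J0)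
      have hTK : (((LinearMap.ker (LinearMap.toSpanSingleton R M m0)).map
          J0.mkQ).restrictScalars K).FG := IsNoetherian.noetherian _
      obtain ⟨S, hS⟩ := hTK
      refine ⟨S, le_antisymm (Submodule.span_le.mpr ?_) ?_⟩
      · intro z hz
        have h2 : z ∈ Submodule.span K (S : Set (R ⧸ J0)) := Submodule.subset_span hz
        rw [hS] at h2
        exact h2
      · intro z hz
        have h1 : z ∈ Submodule.span K (S : Set (R ⧸ J0)) := by
          rw [hS]
          exact hz
        exact Submodule.span_le_restrictScalars K R _ h1
    · rw [Submodule.ker_mkQ, inf_of_le_right hJ0le]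
      exact hJ0FG
  exact Module.finitePresentation_of_surjective _ hf hFG

end JacProof

/-- The Jacobson algebra `R = K⟨x,y⟩/(yx-1)` is not left Noetherian, yet every simple
left `R`-module is finitely presented. -/
theorem jacobsonAlgebra_not_noetherian_and_simples_finitelyPresented
    (K : Type) [Field K] :
    ¬ IsNoetherianRing (JacobsonAlgebra K) ∧
      (∀ (M : Type) [AddCommGroup M] [Module (JacobsonAlgebra K) M],
        IsSimpleModule (JacobsonAlgebra K) M →
          Module.FinitePresentation (JacobsonAlgebra K) M) := by
  refine ⟨JacProof.not_noetherian K, ?_⟩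
  intro M _ _ hM
  haveI := hM
  by_cases h : ∀ m : M, (1 - JacProof.Xg K * JacProof.Yg K) • m = 0
  · exact JacProof.caseB K M h
  · push_neg at h
    obtain ⟨m, hm⟩ := h
    exact JacProof.caseA K M m hm
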